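/- Let Ω ⊂ ℝ² be a bounded open set and let (u_{1n}, u_{2n}) ∈ C²(Ω)² be a sequence of solutions of Δu_{1n} + V_{1n}e^{u_{2n}} = 0 and Δu_{2n} + V_{2n}e^{u_{1n}} = 0 in Ω, with ‖V_{1n}‖_{L^∞(Ω)} + ‖V_{2n}‖_{L^∞(Ω)} ≤ C₁ and ∫_Ω (e^{u_{1n}} + e^{u_{2n}}) dx ≤ C₂ for all n. If there exist a point x̄ ∈ Ω and a sequence x_{1n} → x̄ with u_{1n}(x_{1n}) → +∞, then there exist a subsequence and a sequence x_{2n} → x̄ along it with u_{2n}(x_{2n}) → +∞. In particular, blow-up of the two components of the system occurs simultaneously at the same points. -/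

import Mathlib

open MeasureTheory Metric Filter

noncomputable section

/-- The Euclidean plane ℝ². -/
abbrev Plane := EuclideanSpace ℝ (Fin 2)

/-- The Laplacian of `f : ℝ² → ℝ`. -/
noncomputable def lap (f : Plane → ℝ) (x : Plane) : ℝ :=
  ∑ i : Fin 2, iteratedFDeriv ℝ 2 f x (fun _ => EuclideanSpace.single i 1)

open Real Topology

namespace Stmt7Aux



def e0 : Plane := EuclideanSpace.single 0 1
def e1 : Plane := EuclideanSpace.single 1 1

def vv (θ : ℝ) : Plane := Real.cos θ • e0 + Real.sin θ • e1
def ww (θ : ℝ) : Plane := (-Real.sin θ) • e0 + Real.cos θ • e1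

lemma coord_apply (a b : ℝ) : (a • e0 + b • e1 : Plane) 0 = a ∧ (a • e0 + b • e1 : Plane) 1 = b := by
  constructor <;> simp [e0, e1, EuclideanSpace.single_apply]

lemma norm_coord (a b : ℝ) : ‖(a • e0 + b • e1 : Plane)‖ = Real.sqrt (a^2 + b^2) := by
  rw [EuclideanSpace.norm_eq]
  rw [Fin.sum_univ_two, (coord_apply a b).1, (coord_apply a b).2]
  simp [Real.norm_eq_abs, sq_abs]

lemma norm_vv (θ : ℝ) : ‖vv θ‖ = 1 := by
  rw [vv, norm_coord, Real.cos_sq_add_sin_sq, Real.sqrt_one]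

lemma norm_ww (θ : ℝ) : ‖ww θ‖ = 1 := by
  rw [ww, norm_coord]
  rw [neg_pow, show ((-1:ℝ)^2) = 1 by norm_num, one_mul, Real.sin_sq_add_cos_sq, Real.sqrt_one]

lemma hasDerivAt_vv (θ : ℝ) : HasDerivAt vv (ww θ) θ := by
  have h1 : HasDerivAt (fun t => Real.cos t • e0) ((-Real.sin θ) • e0) θ :=
    (Real.hasDerivAt_cos θ).smul_const e0
  have h2 : HasDerivAt (fun t => Real.sin t • e1) (Real.cos θ • e1) θ :=
    (Real.hasDerivAt_sin θ).smul_const e1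
  exact h1.add h2

lemma hasDerivAt_ww (θ : ℝ) : HasDerivAt ww (-vv θ) θ := by
  have h1 : HasDerivAt (fun t => (-Real.sin t) • e0) ((-Real.cos θ) • e0) θ :=
    ((Real.hasDerivAt_sin θ).neg).smul_const e0
  have h2 : HasDerivAt (fun t => Real.cos t • e1) ((-Real.sin θ) • e1) θ :=
    (Real.hasDerivAt_cos θ).smul_const e1
  have := h1.add h2
  refine this.congr_deriv ?_
  simp [vv, smul_smul, neg_smul]
  abel

lemma vv_periodic : vv (-Real.pi) = vv Real.pi := by
  simp [vv]

lemma ww_periodic : ww (-Real.pi) = ww Real.pi := by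
  simp [ww]

/-- The point `c + ρ • vv θ`. -/
def pp (c : Plane) (ρ θ : ℝ) : Plane := c + ρ • vv θ

lemma pp_mem_closedBall (c : Plane) {ρ : ℝ} (θ : ℝ) {R : ℝ} (h : |ρ| ≤ R) :
    pp c ρ θ ∈ closedBall c R := by
  rw [mem_closedBall, dist_eq_norm, pp, add_sub_cancel_left, norm_smul, norm_vv,
    mul_one, Real.norm_eq_abs]
  exact h

lemma pp_mem_ball (c : Plane) {ρ : ℝ} (θ : ℝ) {R : ℝ} (h : |ρ| < R) :
    pp c ρ θ ∈ ball c R := by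
  rw [mem_ball, dist_eq_norm, pp, add_sub_cancel_left, norm_smul, norm_vv,
    mul_one, Real.norm_eq_abs]
  exact h

lemma hasDerivAt_pp_rho (c : Plane) (ρ θ : ℝ) :
    HasDerivAt (fun t => pp c t θ) (vv θ) ρ := by
  have : HasDerivAt (fun t : ℝ => t • vv θ) ((1:ℝ) • vv θ) ρ := (hasDerivAt_id ρ).smul_const _
  simpa [pp, one_smul] using this.const_add c

lemma hasDerivAt_pp_theta (c : Plane) (ρ θ : ℝ) :
    HasDerivAt (fun t => pp c ρ t) (ρ • ww θ) θ := by
  exact (((hasDerivAt_vv θ).const_smul ρ).const_add c)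

lemma continuous_pp (c : Plane) : Continuous (fun q : ℝ × ℝ => pp c q.1 q.2) := by
  unfold pp vv
  fun_prop


lemma continuous_vv : Continuous vv := by unfold vv; fun_prop
lemma continuous_ww : Continuous ww := by unfold ww; fun_prop

lemma lap_eq (u : Plane → ℝ) (x : Plane) :
    lap u x = fderiv ℝ (fderiv ℝ u) x e0 e0 + fderiv ℝ (fderiv ℝ u) x e1 e1 := by
  rw [lap, Fin.sum_univ_two]
  rw [iteratedFDeriv_two_apply, iteratedFDeriv_two_apply]
  rfl

set_option maxHeartbeats 2000000 in
lemma circle_bound {U : Set Plane} (hU : IsOpen U) {u : Plane → ℝ} (hu : ContDiffOn ℝ 2 u U)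
    {c : Plane} {R R' K : ℝ} (hR : 0 < R) (hRR' : R < R') (hsub : closedBall c R' ⊆ U)
    (hK : ∀ x ∈ closedBall c R', -K ≤ lap u x) :
    ∀ ρ ∈ Set.Icc 0 R,
      2 * π * u c ≤ (∫ θ in (-π)..π, u (pp c ρ θ)) + π * K * ρ ^ 2 / 2 := by
  set f₁ := fderiv ℝ u with hf₁
  set f₂ := fderiv ℝ f₁ with hf₂
  have hdiff : ∀ x ∈ U, HasFDerivAt u (f₁ x) x := fun x hx =>
    ((hu.differentiableOn (by norm_num)).differentiableAt (hU.mem_nhds hx)).hasFDerivAt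
  have hC1 : ContDiffOn ℝ 1 f₁ U := hu.fderiv_of_isOpen hU (by norm_num)
  have hdiff2 : ∀ x ∈ U, HasFDerivAt f₁ (f₂ x) x := fun x hx =>
    ((hC1.differentiableOn one_ne_zero).differentiableAt (hU.mem_nhds hx)).hasFDerivAt
  have hc1 : ContinuousOn f₁ U := hu.continuousOn_fderiv_of_isOpen hU (by norm_num)
  have hc2 : ContinuousOn f₂ U := hC1.continuousOn_fderiv_of_isOpen hU le_rfl
  obtain ⟨M₁, hM₁⟩ := (isCompact_closedBall c R').exists_bound_of_continuousOn (hc1.mono hsub)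
  obtain ⟨M₂, hM₂⟩ := (isCompact_closedBall c R').exists_bound_of_continuousOn (f := f₂) (hc2.mono hsub)
  have hmem : ∀ {ρ : ℝ}, ∀ θ, |ρ| ≤ R' → pp c ρ θ ∈ U := fun θ h =>
    hsub (pp_mem_closedBall c θ h)
  set ε := (R' - R) / 2 with hεdef
  have hε : 0 < ε := by simp only [hεdef]; linarith
  have haux : ∀ ρ₀ x : ℝ, |ρ₀| ≤ R → x ∈ ball ρ₀ ε → |x| ≤ R' := by
    intro ρ₀ x h hx
    rw [mem_ball, Real.dist_eq] at hx
    have := abs_sub_abs_le_abs_sub x ρ₀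
    simp only [hεdef] at hx
    linarith
  -- continuity helpers
  have hcontp : ∀ (ρ : ℝ), Continuous (fun θ : ℝ => pp c ρ θ) := by
    intro ρ; exact (continuous_pp c).comp (continuous_const.prodMk continuous_id)
  have hcontu : ∀ {ρ : ℝ}, |ρ| ≤ R' → Continuous (fun θ : ℝ => u (pp c ρ θ)) := by
    intro ρ h
    exact (hu.continuousOn).comp_continuous (hcontp ρ) (fun θ => hmem θ h)
  have hcontf1 : ∀ {ρ : ℝ}, |ρ| ≤ R' → Continuous (fun θ : ℝ => f₁ (pp c ρ θ)) := by
    intro ρ h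
    exact hc1.comp_continuous (hcontp ρ) (fun θ => hmem θ h)
  have hcontf2 : ∀ {ρ : ℝ}, |ρ| ≤ R' → Continuous (fun θ : ℝ => f₂ (pp c ρ θ)) := by
    intro ρ h
    exact hc2.comp_continuous (hcontp ρ) (fun θ => hmem θ h)
  have hcontf1v : ∀ {ρ : ℝ}, |ρ| ≤ R' → Continuous (fun θ : ℝ => f₁ (pp c ρ θ) (vv θ)) :=
    fun h => (hcontf1 h).clm_apply continuous_vv
  have hcontf2vv : ∀ {ρ : ℝ}, |ρ| ≤ R' →
      Continuous (fun θ : ℝ => f₂ (pp c ρ θ) (vv θ) (vv θ)) :=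
    fun h => ((hcontf2 h).clm_apply continuous_vv).clm_apply continuous_vv
  have hcontf2ww : ∀ {ρ : ℝ}, |ρ| ≤ R' →
      Continuous (fun θ : ℝ => f₂ (pp c ρ θ) (ww θ) (ww θ)) :=
    fun h => ((hcontf2 h).clm_apply continuous_ww).clm_apply continuous_ww
  set g : ℝ → ℝ := fun ρ => ∫ θ in (-π)..π, u (pp c ρ θ) with hgdef
  set G : ℝ → ℝ := fun ρ => ∫ θ in (-π)..π, f₁ (pp c ρ θ) (vv θ) with hGdef
  set A : ℝ → ℝ := fun ρ => ∫ θ in (-π)..π, f₂ (pp c ρ θ) (vv θ) (vv θ) with hAdef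
  set W : ℝ → ℝ := fun ρ => ∫ θ in (-π)..π, f₂ (pp c ρ θ) (ww θ) (ww θ) with hWdef
  -- derivative of g
  have hgG : ∀ ρ₀ : ℝ, |ρ₀| ≤ R → HasDerivAt g (G ρ₀) ρ₀ := by
    intro ρ₀ h₀
    have hR'₀ : |ρ₀| ≤ R' := h₀.trans hRR'.le
    refine (intervalIntegral.hasDerivAt_integral_of_dominated_loc_of_deriv_le (ball_mem_nhds ρ₀ hε)
      (F := fun x θ => u (pp c x θ)) (F' := fun x θ => f₁ (pp c x θ) (vv θ))
      (bound := fun _ => M₁) ?_ ?_ ?_ ?_ ?_ ?_).2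
    · filter_upwards [isOpen_ball.mem_nhds (mem_ball_self hε)] with x hx
      exact (hcontu (haux ρ₀ x h₀ hx)).aestronglyMeasurable
    · exact (hcontu hR'₀).intervalIntegrable _ _
    · exact (hcontf1v hR'₀).aestronglyMeasurable
    · refine Filter.Eventually.of_forall fun θ _ x hx => ?_
      have hxR' : |x| ≤ R' := haux ρ₀ x h₀ hx
      calc ‖f₁ (pp c x θ) (vv θ)‖ ≤ ‖f₁ (pp c x θ)‖ * ‖vv θ‖ :=
            (f₁ (pp c x θ)).le_opNorm _
        _ ≤ M₁ := by rw [norm_vv, mul_one]; exact hM₁ _ (pp_mem_closedBall c θ hxR')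
    · exact intervalIntegrable_const
    · refine Filter.Eventually.of_forall fun θ _ x hx => ?_
      exact (hdiff _ (hmem θ (haux ρ₀ x h₀ hx))).comp_hasDerivAt x (hasDerivAt_pp_rho c x θ)
  -- derivative of G
  have hGA : ∀ ρ₀ : ℝ, |ρ₀| ≤ R → HasDerivAt G (A ρ₀) ρ₀ := by
    intro ρ₀ h₀
    have hR'₀ : |ρ₀| ≤ R' := h₀.trans hRR'.le
    refine (intervalIntegral.hasDerivAt_integral_of_dominated_loc_of_deriv_le (ball_mem_nhds ρ₀ hε)
      (F := fun x θ => f₁ (pp c x θ) (vv θ))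
      (F' := fun x θ => f₂ (pp c x θ) (vv θ) (vv θ))
      (bound := fun _ => M₂) ?_ ?_ ?_ ?_ ?_ ?_).2
    · filter_upwards [isOpen_ball.mem_nhds (mem_ball_self hε)] with x hx
      exact (hcontf1v (haux ρ₀ x h₀ hx)).aestronglyMeasurable
    · exact (hcontf1v hR'₀).intervalIntegrable _ _
    · exact (hcontf2vv hR'₀).aestronglyMeasurable
    · refine Filter.Eventually.of_forall fun θ _ x hx => ?_
      have hxR' : |x| ≤ R' := haux ρ₀ x h₀ hx
      calc ‖f₂ (pp c x θ) (vv θ) (vv θ)‖ ≤ ‖f₂ (pp c x θ) (vv θ)‖ * ‖vv θ‖ :=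
            (f₂ (pp c x θ) (vv θ)).le_opNorm _
        _ ≤ ‖f₂ (pp c x θ)‖ * ‖vv θ‖ * ‖vv θ‖ :=
            mul_le_mul_of_nonneg_right ((f₂ (pp c x θ)).le_opNorm _) (norm_nonneg _)
        _ ≤ M₂ := by
            rw [norm_vv, mul_one, mul_one]; exact hM₂ _ (pp_mem_closedBall c θ hxR')
    · exact intervalIntegrable_const
    · refine Filter.Eventually.of_forall fun θ _ x hx => ?_
      have hmemx := hmem θ (haux ρ₀ x h₀ hx)
      have hcl : HasDerivAt (fun y => f₁ (pp c y θ)) (f₂ (pp c x θ) (vv θ)) x :=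
        (hdiff2 _ hmemx).comp_hasDerivAt x (hasDerivAt_pp_rho c x θ)
      simpa using hcl.clm_apply (hasDerivAt_const x (vv θ))
  -- trace identity
  have htrace : ∀ x θ, f₂ x (vv θ) (vv θ) + f₂ x (ww θ) (ww θ) = lap u x := by
    intro x θ
    rw [lap_eq, vv, ww]
    have h := Real.sin_sq_add_cos_sq θ
    simp only [map_add, _root_.map_smul, _root_.map_neg, ContinuousLinearMap.add_apply,
      ContinuousLinearMap.smul_apply, ContinuousLinearMap.neg_apply, smul_eq_mul, neg_smul,
      _root_.map_neg, neg_neg, neg_mul, mul_neg]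
    rw [hf₂, ← hf₁]
    linear_combination (f₂ x e0 e0 + f₂ x e1 e1) * h
  -- angular identity : ρ * W ρ = G ρ for |ρ| ≤ R
  have hangle : ∀ ρ : ℝ, |ρ| ≤ R → ρ * W ρ = G ρ := by
    intro ρ h₀
    have hR'₀ : |ρ| ≤ R' := h₀.trans hRR'.le
    have hk : ∀ θ : ℝ, HasDerivAt (fun t => f₁ (pp c ρ t) (ww t))
        (ρ * f₂ (pp c ρ θ) (ww θ) (ww θ) - f₁ (pp c ρ θ) (vv θ)) θ := by
      intro θ
      have hcl : HasDerivAt (fun t => f₁ (pp c ρ t)) (f₂ (pp c ρ θ) (ρ • ww θ)) θ :=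
        (hdiff2 _ (hmem θ hR'₀)).comp_hasDerivAt θ (hasDerivAt_pp_theta c ρ θ)
      have h2 := hcl.clm_apply (hasDerivAt_ww θ)
      refine h2.congr_deriv ?_
      rw [_root_.map_smul, ContinuousLinearMap.smul_apply, _root_.map_neg, smul_eq_mul]
      ring
    have hi1 : IntervalIntegrable (fun θ => ρ * f₂ (pp c ρ θ) (ww θ) (ww θ)) volume (-π) π :=
      (continuous_const.mul (hcontf2ww hR'₀)).intervalIntegrable _ _
    have hi2 : IntervalIntegrable (fun θ => f₁ (pp c ρ θ) (vv θ)) volume (-π) π :=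
      (hcontf1v hR'₀).intervalIntegrable _ _
    have hftc := intervalIntegral.integral_eq_sub_of_hasDerivAt
      (f := fun t => f₁ (pp c ρ t) (ww t)) (fun θ _ => hk θ) (hi1.sub hi2)
    have h0 : f₁ (pp c ρ π) (ww π) = f₁ (pp c ρ (-π)) (ww (-π)) := by
      rw [pp, pp, ← vv_periodic, ← ww_periodic]
    simp only [h0, sub_self] at hftc
    have hsplit : (∫ θ in (-π)..π,
        (ρ * f₂ (pp c ρ θ) (ww θ) (ww θ) - f₁ (pp c ρ θ) (vv θ)))
        = ρ * W ρ - G ρ := by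
      rw [intervalIntegral.integral_sub hi1 hi2, intervalIntegral.integral_const_mul]
    rw [hsplit] at hftc
    linarith [hftc]
  -- lower bound for the Laplacian integral
  have hLlow : ∀ ρ : ℝ, |ρ| ≤ R → -(2 * π * K) ≤ A ρ + W ρ := by
    intro ρ h₀
    have hR'₀ : |ρ| ≤ R' := h₀.trans hRR'.le
    have hsum : A ρ + W ρ = ∫ θ in (-π)..π, lap u (pp c ρ θ) := by
      rw [hAdef, hWdef, ← intervalIntegral.integral_add
        ((hcontf2vv hR'₀).intervalIntegrable _ _) ((hcontf2ww hR'₀).intervalIntegrable _ _)]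
      exact intervalIntegral.integral_congr fun θ _ => htrace (pp c ρ θ) θ
    have hlapcont : Continuous (fun θ : ℝ => lap u (pp c ρ θ)) := by
      have heq : (fun θ : ℝ => lap u (pp c ρ θ)) = fun θ =>
          f₂ (pp c ρ θ) e0 e0 + f₂ (pp c ρ θ) e1 e1 := by
        funext θ; rw [lap_eq, hf₂, ← hf₁]
      rw [heq]
      exact (((hcontf2 hR'₀).clm_apply continuous_const).clm_apply continuous_const).add
        (((hcontf2 hR'₀).clm_apply continuous_const).clm_apply continuous_const)
    have hmono : (∫ _θ in (-π)..π, (-K : ℝ)) ≤ ∫ θ in (-π)..π, lap u (pp c ρ θ) := by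
      apply intervalIntegral.integral_mono_on (by linarith [Real.pi_pos])
        intervalIntegrable_const (hlapcont.intervalIntegrable _ _)
      intro θ _
      exact hK _ (pp_mem_closedBall c θ hR'₀)
    rw [intervalIntegral.integral_const, smul_eq_mul] at hmono
    rw [hsum]
    calc -(2 * π * K) = (π - (-π)) * (-K) := by ring
      _ ≤ _ := hmono
  have hg0 : g 0 = 2 * π * u c := by
    have hcc : ∀ θ : ℝ, u (pp c 0 θ) = u c := by intro θ; rw [pp, zero_smul, add_zero]
    rw [hgdef]
    simp only [hcc]
    rw [intervalIntegral.integral_const, smul_eq_mul]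
    ring
  have hgoal : ∀ ρ' : ℝ, (∫ θ in (-π)..π, u (pp c ρ' θ)) = g ρ' := fun _ => rfl
  clear_value g G A W
  clear hgdef hGdef hAdef hWdef
  -- step 1 : G ρ ≥ -(π K ρ) on (0, R]
  have habs : ∀ x ∈ Set.Icc (0:ℝ) R, |x| ≤ R := by
    intro x hx; rw [abs_of_nonneg hx.1]; exact hx.2
  have key1 : ∀ ρ ∈ Set.Ioc (0:ℝ) R, -(π * K * ρ) ≤ G ρ := by
    intro ρ hρ
    set m : ℝ → ℝ := fun ρ => ρ * G ρ + π * K * ρ ^ 2 with hmdef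
    have hm' : ∀ x ∈ Set.Icc (0:ℝ) R,
        HasDerivAt m (x * (A x + W x + 2 * π * K)) x := by
      intro x hx
      have h1 := ((hasDerivAt_id x).mul (hGA x (habs x hx))).add
        (((hasDerivAt_pow 2 x)).const_mul (π * K))
      refine h1.congr_deriv ?_
      rw [← hangle x (habs x hx)]
      simp only [id_eq]
      push_cast
      ring
    have hmono : MonotoneOn m (Set.Icc 0 R) := by
      apply monotoneOn_of_deriv_nonneg (convex_Icc 0 R)
      · exact fun x hx => ((hm' x hx).continuousAt).continuousWithinAt
      · intro x hx
        rw [interior_Icc] at hx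
        exact ((hm' x ⟨hx.1.le, hx.2.le⟩).differentiableAt).differentiableWithinAt
      · intro x hx
        rw [interior_Icc] at hx
        rw [(hm' x ⟨hx.1.le, hx.2.le⟩).deriv]
        have hLx := hLlow x (habs x ⟨hx.1.le, hx.2.le⟩)
        exact mul_nonneg hx.1.le (by linarith)
    have h0m : m 0 ≤ m ρ := hmono ⟨le_rfl, hR.le⟩ ⟨hρ.1.le, hρ.2⟩ hρ.1.le
    have hm0 : m 0 = 0 := by rw [hmdef]; ring
    rw [hm0] at h0m
    have hρ0 : 0 < ρ := hρ.1
    rw [hmdef] at h0m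
    simp only at h0m
    nlinarith [h0m]
  -- step 2 : conclusion
  intro ρ hρ
  set nfun : ℝ → ℝ := fun ρ => g ρ + π * K * ρ ^ 2 / 2 with hndef
  have hn' : ∀ x ∈ Set.Icc (0:ℝ) R, HasDerivAt nfun (G x + π * K * x) x := by
    intro x hx
    have h1 := (hgG x (habs x hx)).add
      ((((hasDerivAt_pow 2 x)).const_mul (π * K)).div_const 2)
    refine h1.congr_deriv ?_
    push_cast
    ring
  have hmono : MonotoneOn nfun (Set.Icc 0 R) := by
    apply monotoneOn_of_deriv_nonneg (convex_Icc 0 R)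
    · exact fun x hx => ((hn' x hx).continuousAt).continuousWithinAt
    · intro x hx
      rw [interior_Icc] at hx
      exact ((hn' x ⟨hx.1.le, hx.2.le⟩).differentiableAt).differentiableWithinAt
    · intro x hx
      rw [interior_Icc] at hx
      rw [(hn' x ⟨hx.1.le, hx.2.le⟩).deriv]
      have := key1 x ⟨hx.1, hx.2.le⟩
      linarith
  have h0n : nfun 0 ≤ nfun ρ := hmono ⟨le_rfl, hR.le⟩ hρ hρ.1
  have hn0 : nfun 0 = 2 * π * u c := by rw [hndef]; simp [hg0]
  rw [hn0, hndef] at h0n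
  rw [hgoal ρ]
  simpa using h0n


/-- The chart `ℝ² → Plane`. -/
def TT (c : Plane) (q : ℝ × ℝ) : Plane := c + (q.1 • e0 + q.2 • e1)

def PhiE : (ℝ × ℝ) ≃ᵐ Plane :=
  (MeasurableEquiv.finTwoArrow).symm.trans (MeasurableEquiv.toLp 2 (Fin 2 → ℝ))

lemma PhiE_eq (q : ℝ × ℝ) : PhiE q = q.1 • e0 + q.2 • e1 := by
  refine PiLp.ext fun i => ?_
  fin_cases i <;>
    simp [PhiE, MeasurableEquiv.finTwoArrow,
      e0, e1, EuclideanSpace.single_apply, MeasurableEquiv.trans_apply]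

lemma measurePreserving_PhiE : MeasurePreserving PhiE := by
  exact ((EuclideanSpace.volume_preserving_symm_measurableEquiv_toLp (Fin 2)).symm).comp
    ((volume_preserving_finTwoArrow ℝ).symm)

lemma TT_polar (c : Plane) (p : ℝ × ℝ) : TT c (polarCoord.symm p) = pp c p.1 p.2 := by
  have h : polarCoord.symm p = (p.1 * cos p.2, p.1 * sin p.2) := rfl
  rw [TT, h, pp, vv, smul_add, smul_smul, smul_smul]

lemma polar_area {w : Plane → ℝ} {c : Plane} {R : ℝ} (hR : 0 < R)
    (hw : ContinuousOn w (closedBall c R)) :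
    ∫ x in ball c R, w x
      = ∫ ρ in Set.Ioo (0:ℝ) R, ρ * ∫ θ in (-π)..π, w (pp c ρ θ) := by
  have hπ := Real.pi_pos
  -- step 1: to ℝ²
  have step1 : ∫ x in ball c R, w x
      = ∫ q : ℝ × ℝ, Set.indicator (ball c R) w (TT c q) := by
    rw [← integral_indicator measurableSet_ball]
    have h1 : ∫ x, Set.indicator (ball c R) w x
        = ∫ x, Set.indicator (ball c R) w (c + x) :=
      (integral_add_left_eq_self _ c).symm
    rw [h1, ← measurePreserving_PhiE.integral_comp' (fun q => Set.indicator (ball c R) w (c + q))]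
    simp_rw [PhiE_eq]
    rfl
  -- step 2: polar coordinates
  have step2 : ∫ q : ℝ × ℝ, Set.indicator (ball c R) w (TT c q)
      = ∫ p in polarCoord.target, p.1 • Set.indicator (ball c R) w (TT c (polarCoord.symm p)) :=
    (integral_comp_polarCoord_symm _).symm
  -- step 3: the integrand on the target
  have step3 : ∫ p in polarCoord.target, p.1 • Set.indicator (ball c R) w (TT c (polarCoord.symm p))
      = ∫ p in (Set.Ioo (0:ℝ) R) ×ˢ (Set.Ioo (-π) π), p.1 * w (pp c p.1 p.2) := by
    have htgt : polarCoord.target = Set.Ioi (0:ℝ) ×ˢ Set.Ioo (-π) π := rfl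
    have hmeas : MeasurableSet ({p : ℝ × ℝ | p.1 < R}) := by
      exact measurableSet_lt (by fun_prop) measurable_const
    have hcong : ∀ p ∈ polarCoord.target,
        p.1 • Set.indicator (ball c R) w (TT c (polarCoord.symm p))
        = Set.indicator {p : ℝ × ℝ | p.1 < R} (fun p => p.1 * w (pp c p.1 p.2)) p := by
      rintro ⟨ρ, θ⟩ hp
      rw [htgt] at hp
      obtain ⟨hρ, hθ⟩ := hp
      simp only [Set.mem_Ioi] at hρ
      have habs : |ρ| = ρ := abs_of_pos hρ
      by_cases h : ρ < R
      · have hmem : pp c ρ θ ∈ ball c R := by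
          rw [mem_ball, dist_eq_norm, pp, add_sub_cancel_left, norm_smul, Real.norm_eq_abs,
            habs]
          have : ‖vv θ‖ = 1 := by
            rw [vv, norm_coord, Real.cos_sq_add_sin_sq, Real.sqrt_one]
          rw [this, mul_one]; exact h
        rw [TT_polar, Set.indicator_of_mem hmem, Set.indicator_of_mem (show ((ρ,θ) : ℝ × ℝ) ∈ {p : ℝ × ℝ | p.1 < R} from h)]
        simp [smul_eq_mul]
      · have hmem : pp c ρ θ ∉ ball c R := by
          rw [mem_ball, dist_eq_norm, pp, add_sub_cancel_left, norm_smul, Real.norm_eq_abs,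
            habs]
          have : ‖vv θ‖ = 1 := by
            rw [vv, norm_coord, Real.cos_sq_add_sin_sq, Real.sqrt_one]
          rw [this, mul_one]; exact not_lt.mpr (not_lt.mp h)
        rw [TT_polar, Set.indicator_of_notMem hmem, Set.indicator_of_notMem (show ((ρ,θ) : ℝ × ℝ) ∉ {p : ℝ × ℝ | p.1 < R} from h)]
        simp
    have hseteq : polarCoord.target ∩ {p : ℝ × ℝ | p.1 < R}
        = (Set.Ioo (0:ℝ) R) ×ˢ (Set.Ioo (-π) π) := by
      rw [htgt]
      ext p
      constructor
      · rintro ⟨⟨h1, h2⟩, h3⟩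
        exact ⟨⟨h1, h3⟩, h2⟩
      · rintro ⟨⟨h1, h3⟩, h2⟩
        exact ⟨⟨h1, h2⟩, h3⟩
    rw [setIntegral_congr_fun polarCoord.open_target.measurableSet hcong,
      setIntegral_indicator hmeas, hseteq]
  -- step 4: Fubini
  have hcontF : ContinuousOn (fun p : ℝ × ℝ => p.1 * w (pp c p.1 p.2))
      ((Set.Icc (0:ℝ) R) ×ˢ (Set.Icc (-π) π)) := by
    apply ContinuousOn.mul continuousOn_fst
    refine hw.comp ((continuous_pp c).continuousOn) ?_
    rintro ⟨a, b⟩ ⟨ha, _⟩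
    exact pp_mem_closedBall c b (by rw [abs_of_nonneg ha.1]; exact ha.2)
  have hintF : IntegrableOn (fun p : ℝ × ℝ => p.1 * w (pp c p.1 p.2))
      ((Set.Ioo (0:ℝ) R) ×ˢ (Set.Ioo (-π) π)) := by
    apply (hcontF.integrableOn_compact (isCompact_Icc.prod isCompact_Icc)).mono_set
    exact Set.prod_mono Set.Ioo_subset_Icc_self Set.Ioo_subset_Icc_self
  have step4 : ∫ p in (Set.Ioo (0:ℝ) R) ×ˢ (Set.Ioo (-π) π), p.1 * w (pp c p.1 p.2)
      = ∫ ρ in Set.Ioo (0:ℝ) R, ∫ θ in Set.Ioo (-π) π, ρ * w (pp c ρ θ) := by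
    rw [MeasureTheory.Measure.volume_eq_prod] at hintF ⊢
    exact setIntegral_prod _ hintF
  rw [step1, step2, step3, step4]
  apply setIntegral_congr_fun measurableSet_Ioo
  intro ρ _
  simp only
  rw [← integral_Ioc_eq_integral_Ioo, ← intervalIntegral.integral_of_le (by linarith),
    intervalIntegral.integral_const_mul]

lemma ball_area (c : Plane) {R : ℝ} (hR : 0 < R) :
    (volume (ball c R)).toReal = π * R ^ 2 := by
  have h := polar_area (w := fun _ => (1:ℝ)) (c := c) hR continuousOn_const
  rw [setIntegral_const] at h
  simp only [smul_eq_mul, mul_one, intervalIntegral.integral_const, smul_eq_mul] at h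
  rw [← measureReal_def, h, ← integral_Ioc_eq_integral_Ioo, ← intervalIntegral.integral_of_le hR.le]
  rw [intervalIntegral.integral_mul_const, integral_id]
  ring


lemma point_bound {U : Set Plane} (hU : IsOpen U) {u : Plane → ℝ} (hu : ContDiffOn ℝ 2 u U)
    {c : Plane} {R R' K C₂ : ℝ} (hR : 0 < R) (hRR' : R < R') (hsub : closedBall c R' ⊆ U)
    (hK : ∀ x ∈ closedBall c R', -K ≤ lap u x)
    (hint : IntegrableOn (fun x => Real.exp (u x)) (ball c R))
    (hIB : (∫ x in ball c R, Real.exp (u x)) ≤ C₂) :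
    u c ≤ K * R ^ 2 / 8 + Real.log (C₂ / (π * R ^ 2)) := by
  have hπ := Real.pi_pos
  have hsubR : closedBall c R ⊆ U := fun x hx =>
    hsub (closedBall_subset_closedBall hRR'.le hx)
  have hucont : ContinuousOn u (closedBall c R) := hu.continuousOn.mono hsubR
  -- continuity of the circle average
  have hgcont : ContinuousOn (fun ρ : ℝ => ∫ θ in (-π)..π, u (pp c ρ θ)) (Set.Icc 0 R) := by
    rw [continuousOn_iff_continuous_restrict]
    have : Continuous (Function.uncurry
        (fun (x : ↥(Set.Icc (0:ℝ) R)) (θ : ℝ) => u (pp c (x : ℝ) θ))) := by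
      apply hucont.comp_continuous
      · exact (continuous_pp c).comp ((continuous_subtype_val.comp continuous_fst).prodMk
          continuous_snd)
      · rintro ⟨⟨x, hx⟩, θ⟩
        exact pp_mem_closedBall c θ (by rw [abs_of_nonneg hx.1]; exact hx.2)
    exact intervalIntegral.continuous_parametric_intervalIntegral_of_continuous' this _ _
  have hρgcont : ContinuousOn (fun ρ : ℝ => ρ * ∫ θ in (-π)..π, u (pp c ρ θ)) (Set.Icc 0 R) :=
    continuousOn_id.mul hgcont
  -- lower bound for the ball integral
  have hpolar := polar_area hR hucont
  have hlow : ∀ ρ ∈ Set.Ioo (0:ℝ) R,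
      2*π*(u c)*ρ - π*K/2*ρ^3 ≤ ρ * ∫ θ in (-π)..π, u (pp c ρ θ) := by
    intro ρ hρ
    have := circle_bound hU hu hR hRR' hsub hK ρ ⟨hρ.1.le, hρ.2.le⟩
    nlinarith [hρ.1, this]
  have hIlow : ∫ ρ in Set.Ioo (0:ℝ) R, (2*π*(u c)*ρ - π*K/2*ρ^3)
      ≤ ∫ ρ in Set.Ioo (0:ℝ) R, ρ * ∫ θ in (-π)..π, u (pp c ρ θ) := by
    apply setIntegral_mono_on
    · exact ((continuous_const.mul continuous_id).sub
        (continuous_const.mul (continuous_pow 3))).integrableOn_Icc.mono_set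
        Set.Ioo_subset_Icc_self
    · exact (hρgcont.integrableOn_compact isCompact_Icc).mono_set Set.Ioo_subset_Icc_self
    · exact measurableSet_Ioo
    · exact hlow
  have hIcomp : ∫ ρ in Set.Ioo (0:ℝ) R, (2*π*(u c)*ρ - π*K/2*ρ^3)
      = π*R^2*(u c) - π*K*R^4/8 := by
    rw [← integral_Ioc_eq_integral_Ioo, ← intervalIntegral.integral_of_le hR.le]
    rw [intervalIntegral.integral_sub
      ((by fun_prop : Continuous fun x : ℝ => 2*π*(u c)*x).intervalIntegrable _ _)
      ((by fun_prop : Continuous fun x : ℝ => π*K/2*x^3).intervalIntegrable _ _),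
      intervalIntegral.integral_const_mul, intervalIntegral.integral_const_mul,
      integral_id, integral_pow]
    norm_num
    ring
  have hball_low : π*R^2*(u c) - π*K*R^4/8 ≤ ∫ x in ball c R, u x := by
    rw [hpolar]; rw [← hIcomp]; exact hIlow
  -- Jensen
  set μ := volume.restrict (ball c R) with hμ
  haveI : IsFiniteMeasure μ := by
    constructor
    rw [hμ, Measure.restrict_apply_univ]
    exact measure_ball_lt_top
  haveI : NeZero μ := by
    constructor
    rw [← Measure.measure_univ_ne_zero, hμ, Measure.restrict_apply_univ]
    exact (measure_ball_pos volume c hR).ne'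
  have hfi : Integrable u μ :=
    (hucont.integrableOn_compact (isCompact_closedBall c R)).mono_set ball_subset_closedBall
  have hgi : Integrable (Real.exp ∘ u) μ := hint
  have hJ := convexOn_exp.map_average_le Real.continuous_exp.continuousOn isClosed_univ
    (Filter.Eventually.of_forall fun x => Set.mem_univ (u x)) hfi hgi
  rw [average_eq, average_eq] at hJ
  have hμuniv : (μ Set.univ).toReal = π * R^2 := by
    rw [hμ, Measure.restrict_apply_univ, ball_area c hR]
  rw [measureReal_def, hμuniv] at hJ
  have hC₂pos : 0 < C₂ := by
    have h0 : 0 < ∫ x in ball c R, Real.exp (u x) := by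
      rw [(setIntegral_pos_iff_support_of_nonneg_ae ?_ hint)]
      · have : Function.support (fun x => Real.exp (u x)) = Set.univ := by
          ext x; simp [Real.exp_ne_zero]
        rw [this, Set.univ_inter]
        exact measure_ball_pos volume c hR
      · exact Filter.Eventually.of_forall fun x => (Real.exp_pos _).le
    linarith
  have hVB : (0:ℝ) < π * R^2 := by positivity
  -- exp (avg u) ≤ C₂ / (π R²)
  have h1 : (π*R^2)⁻¹ • ∫ x, Real.exp (u x) ∂μ ≤ C₂ / (π*R^2) := by
    rw [smul_eq_mul]
    rw [div_eq_inv_mul]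
    apply mul_le_mul_of_nonneg_left _ (by positivity)
    exact hIB
  have h2 : u c - K*R^2/8 ≤ (π*R^2)⁻¹ • ∫ x, u x ∂μ := by
    rw [smul_eq_mul]
    have := mul_le_mul_of_nonneg_left hball_low (le_of_lt (inv_pos.mpr hVB))
    calc u c - K*R^2/8 = (π*R^2)⁻¹ * (π*R^2*(u c) - π*K*R^4/8) := by
          field_simp
      _ ≤ _ := this
  have h3 : Real.exp (u c - K*R^2/8) ≤ C₂ / (π*R^2) := by
    calc Real.exp (u c - K*R^2/8) ≤ Real.exp ((π*R^2)⁻¹ • ∫ x, u x ∂μ) :=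
          Real.exp_le_exp.mpr h2
      _ ≤ (π*R^2)⁻¹ • ∫ x, Real.exp (u x) ∂μ := by
          simpa [Function.comp] using hJ
      _ ≤ C₂ / (π*R^2) := h1
  have h4 : u c - K*R^2/8 ≤ Real.log (C₂ / (π*R^2)) :=
    (Real.le_log_iff_exp_le (by positivity)).mpr h3
  linarith


end Stmt7Aux

open Stmt7Aux

/-- Simultaneous blow-up for the skew-symmetric system
`Δu₁ₙ + V₁ₙ e^{u₂ₙ} = 0`, `Δu₂ₙ + V₂ₙ e^{u₁ₙ} = 0` in a bounded open `Ω ⊂ ℝ²`: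
if the first component blows up at a point `xbar ∈ Ω` along a sequence `x₁ₙ → xbar`,
then along a subsequence the second component blows up at `xbar` as well. -/
theorem stmt7 (Ω : Set Plane) (hΩo : IsOpen Ω) (hΩb : Bornology.IsBounded Ω)
    (u₁ u₂ V₁ V₂ : ℕ → Plane → ℝ) (C₁ C₂ : ℝ)
    (hcd₁ : ∀ n, ContDiffOn ℝ 2 (u₁ n) Ω) (hcd₂ : ∀ n, ContDiffOn ℝ 2 (u₂ n) Ω)
    (hmV₁ : ∀ n, Measurable (V₁ n)) (hmV₂ : ∀ n, Measurable (V₂ n))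
    (hpde₁ : ∀ n, ∀ x ∈ Ω, lap (u₁ n) x + V₁ n x * Real.exp (u₂ n x) = 0)
    (hpde₂ : ∀ n, ∀ x ∈ Ω, lap (u₂ n) x + V₂ n x * Real.exp (u₁ n x) = 0)
    (hV : ∀ n, ∀ x ∈ Ω, |V₁ n x| + |V₂ n x| ≤ C₁)
    (hint₁ : ∀ n, IntegrableOn (fun x => Real.exp (u₁ n x)) Ω)
    (hint₂ : ∀ n, IntegrableOn (fun x => Real.exp (u₂ n x)) Ω)
    (hmass : ∀ n, (∫ x in Ω, (Real.exp (u₁ n x) + Real.exp (u₂ n x))) ≤ C₂)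
    (xbar : Plane) (hxbar : xbar ∈ Ω) (x₁ : ℕ → Plane) (hx₁Ω : ∀ n, x₁ n ∈ Ω)
    (hx₁ : Tendsto x₁ atTop (nhds xbar))
    (hblow : Tendsto (fun n => u₁ n (x₁ n)) atTop atTop) :
    ∃ φ : ℕ → ℕ, StrictMono φ ∧
      ∃ x₂ : ℕ → Plane, (∀ n, x₂ n ∈ Ω) ∧ Tendsto x₂ atTop (nhds xbar) ∧
        Tendsto (fun n => u₂ (φ n) (x₂ n)) atTop atTop := by
  by_contra hcon
  obtain ⟨r0, hr0pos, hr0⟩ : ∃ r0 > 0, closedBall xbar r0 ⊆ Ω := by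
    obtain ⟨ε, hε, hball⟩ := Metric.isOpen_iff.mp hΩo xbar hxbar
    exact ⟨ε/2, by linarith, (closedBall_subset_ball (by linarith)).trans hball⟩
  set S : ℕ → Set ℕ :=
    fun k => {n | ∃ x ∈ closedBall xbar (r0/((k:ℝ)+1)), (k:ℝ) ≤ u₂ n x} with hSdef
  have hsubball : ∀ k : ℕ, closedBall xbar (r0/((k:ℝ)+1)) ⊆ Ω := by
    intro k
    refine (closedBall_subset_closedBall ?_).trans hr0
    exact div_le_self hr0pos.le (by push_cast; linarith [Nat.cast_nonneg (α := ℝ) k])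
  by_cases hall : ∀ k, (S k).Infinite
  · -- then the conclusion would hold, contradiction
    have hrec : ∀ (k m : ℕ), ∃ n, n ∈ S k ∧ m < n := by
      intro k m
      obtain ⟨n, hn, hmn⟩ := (hall k).exists_gt m
      exact ⟨n, hn, hmn⟩
    choose F hF1 hF2 using hrec
    set φ : ℕ → ℕ := fun k => Nat.rec (F 0 0) (fun k ih => F (k+1) ih) k with hφdef
    have hφmono : StrictMono φ := strictMono_nat_of_lt_succ (fun k => hF2 (k+1) (φ k))
    have hφS : ∀ k, φ k ∈ S k := by
      intro k
      cases k with
      | zero => exact hF1 0 0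
      | succ k => exact hF1 (k+1) (φ k)
    have hx2 : ∀ k : ℕ, ∃ x, x ∈ closedBall xbar (r0/((k:ℝ)+1)) ∧ (k:ℝ) ≤ u₂ (φ k) x := by
      intro k
      obtain ⟨x, hx, hxu⟩ := hφS k
      exact ⟨x, hx, hxu⟩
    choose x₂ hx₂ball hx₂u using hx2
    refine hcon ⟨φ, hφmono, x₂, ?_, ?_, ?_⟩
    · intro k
      exact hsubball k (hx₂ball k)
    · rw [tendsto_iff_dist_tendsto_zero]
      apply squeeze_zero (fun k => dist_nonneg) (fun k => mem_closedBall.mp (hx₂ball k))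
      exact Filter.Tendsto.div_atTop tendsto_const_nhds
        (tendsto_atTop_add_const_right atTop 1 tendsto_natCast_atTop_atTop)
    · exact tendsto_atTop_mono hx₂u tendsto_natCast_atTop_atTop
  · -- some S k₀ is finite : u₂ is bounded above near xbar along a cofinite set of n
    push_neg at hall
    obtain ⟨k₀, hk₀⟩ := hall
    have hfin : (S k₀).Finite := hk₀
    set δ := r0/((k₀:ℝ)+1) with hδdef
    have hδpos : 0 < δ := by positivity
    have hδΩ : closedBall xbar δ ⊆ Ω := hsubball k₀
    set M := (k₀ : ℝ) with hMdef
    set R := δ/4 with hRdef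
    set R' := δ/2 with hR'def
    have hRpos : 0 < R := by positivity
    have hRR' : R < R' := by rw [hRdef, hR'def]; linarith
    set K := C₁ * Real.exp M with hKdef
    set B := K * R^2/8 + Real.log (C₂/(π*R^2)) with hBdef
    have hC₁ : 0 ≤ C₁ := le_trans (by positivity) (hV 0 xbar hxbar)
    -- eventual properties
    have hEv1 : ∀ᶠ n in atTop, n ∉ S k₀ := by
      obtain ⟨N, hN⟩ := hfin.bddAbove
      rw [eventually_atTop]
      exact ⟨N+1, fun n hn hmem => by have := hN hmem; omega⟩
    have hEv2 : ∀ᶠ n in atTop, dist (x₁ n) xbar < R := by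
      obtain ⟨N, hN⟩ := Metric.tendsto_atTop.mp hx₁ R hRpos
      rw [eventually_atTop]
      exact ⟨N, hN⟩
    have hEv3 : ∀ᶠ n in atTop, B < u₁ n (x₁ n) := hblow.eventually_gt_atTop B
    obtain ⟨n, hn1, hn2, hn3⟩ := (hEv1.and (hEv2.and hEv3)).exists
    have hnS := hn1
    have hndist := hn2
    have hnB := hn3
    -- bound on u₂
    have hu₂M : ∀ x ∈ closedBall xbar δ, u₂ n x ≤ M := by
      intro x hx
      by_contra hlt
      exact hnS ⟨x, hx, by push_neg at hlt; exact hlt.le⟩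
    set c := x₁ n with hcdef
    have hsub' : closedBall c R' ⊆ closedBall xbar δ := by
      apply closedBall_subset_closedBall'
      rw [hR'def]
      have : dist c xbar < δ/4 := hndist
      linarith
    have hsubΩ : closedBall c R' ⊆ Ω := hsub'.trans hδΩ
    have hlapK : ∀ x ∈ closedBall c R', -K ≤ lap (u₁ n) x := by
      intro x hx
      have hxδ : x ∈ closedBall xbar δ := hsub' hx
      have hxΩ : x ∈ Ω := hδΩ hxδ
      have hpde := hpde₁ n x hxΩ
      have hlap : lap (u₁ n) x = -(V₁ n x * Real.exp (u₂ n x)) := by linarith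
      rw [hlap, hKdef, neg_le_neg_iff]
      have h1 : V₁ n x ≤ |V₁ n x| := le_abs_self _
      have h2 : |V₁ n x| ≤ C₁ := le_trans (le_add_of_nonneg_right (abs_nonneg _)) (hV n x hxΩ)
      have h3 : Real.exp (u₂ n x) ≤ Real.exp M := Real.exp_le_exp.mpr (hu₂M x hxδ)
      have h4 : 0 < Real.exp (u₂ n x) := Real.exp_pos _
      nlinarith
    have hintB : IntegrableOn (fun x => Real.exp (u₁ n x)) (ball c R) :=
      (hint₁ n).mono_set (fun x hx => hsubΩ
        (ball_subset_closedBall (ball_subset_ball hRR'.le hx)))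
    have hIB : (∫ x in ball c R, Real.exp (u₁ n x)) ≤ C₂ := by
      have hstep1 : (∫ x in ball c R, Real.exp (u₁ n x)) ≤ ∫ x in Ω, Real.exp (u₁ n x) := by
        apply setIntegral_mono_set (hint₁ n)
          (Filter.Eventually.of_forall fun x => (Real.exp_pos _).le)
        exact Filter.Eventually.of_forall (fun x hx => hsubΩ
          (ball_subset_closedBall (ball_subset_ball hRR'.le hx)))
      have hstep2 : (∫ x in Ω, Real.exp (u₁ n x))
          ≤ ∫ x in Ω, (Real.exp (u₁ n x) + Real.exp (u₂ n x)) := by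
        apply setIntegral_mono (hint₁ n) ((hint₁ n).add (hint₂ n))
        intro x
        have := Real.exp_pos (u₂ n x)
        simp only [Pi.add_apply]
        linarith
      linarith [hmass n]
    have hfinal := point_bound hΩo (hcd₁ n) hRpos hRR' hsubΩ hlapK hintB hIB
    rw [← hBdef] at hfinal
    exact absurd hnB (not_lt.mpr hfinal)
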